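/- Fix positive integers d₁,...,dₙ (n ≥ 3). Among all real sequences f₁ ≤ f₂,...,f_{n-1} ≤ fₙ (i.e., f₁ ≤ f_k ≤ fₙ for all k) satisfying Σ f_i d_i = 0 and Σ f_i² d_i = 1, any sequence minimizing (fₙ − f₁)² has the property that every f_k equals either f₁ or fₙ. -/

import Mathlib

open Finset

set_option maxHeartbeats 1000000

private lemma aux_c_le_one (x ε dk : ℝ) (hx : 0 ≤ x) (hd : 0 < dk) (hε : 0 ≤ ε)
    (h : ε * (1 + x * dk) ≤ 1) : x * ε * dk ≤ 1 := by nlinarith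

private lemma aux_m_ge (ε dk r : ℝ) (hε : 0 < ε) (hdk : 1 ≤ dk) (h1 : ε * (2*dk) ≤ 1)
    (hr0 : 0 ≤ r) (hr1 : r ≤ 1) : ε^2 * dk * r ≤ 1/4 := by
  have h2 : ε ≤ 1/2 := by nlinarith
  have h3 : ε^2 * dk ≤ 1/4 := by nlinarith [mul_pos hε hε]
  nlinarith [mul_nonneg (mul_nonneg (sq_nonneg ε) (by linarith : (0:ℝ) ≤ dk)) hr0,
    mul_nonneg (mul_nonneg (sq_nonneg ε) (by linarith : (0:ℝ) ≤ dk))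
      (by linarith : (0:ℝ) ≤ 1 - r)]

private lemma aux_alpha (c m α : ℝ) (hc0 : 0 ≤ c) (hc1 : c ≤ 1) (hm34 : 3/4 ≤ m)
    (hm1 : m < 1) (hαc0 : 0 ≤ α + c) (hkey : (α + c)^2 = c^2 + m) :
    α^2 + 2*c*α = m ∧ 0 < α ∧ α < 1 ∧ 1/4 ≤ α := by
  have hαm : α^2 + 2*c*α = m := by nlinarith
  have hpos : 0 < α := by nlinarith
  have h1 : α < 1 := by nlinarith
  exact ⟨hαm, hpos, h1, by nlinarith⟩

private lemma aux_shift (α δ t x : ℝ) (hα : 1/4 ≤ α) (hδ : 0 < δ) (ht : -(δ/5) ≤ t)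
    (hx : δ ≤ x) : 0 ≤ α * x + t := by
  nlinarith [mul_le_mul_of_nonneg_left hx (by linarith : (0:ℝ) ≤ α),
    mul_le_mul_of_nonneg_right hα hδ.le]

private lemma aux_final (α R : ℝ) (hR : 0 < R) (h0 : 0 < α) (h1 : α < 1)
    (hle : R^2 ≤ α^2 * R^2) : False := by
  nlinarith [mul_pos (mul_pos (show (0:ℝ) < 1 - α by linarith)
    (show (0:ℝ) < 1 + α by linarith)) (mul_pos hR hR)]

/-- Proposition 2.1: among sequences with `f₁ ≤ f_k ≤ f_n`, weighted mean zero and weighted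
second moment one, a minimizer of `(f_n - f₁)²` takes only the two extreme values. -/
theorem minimizer_two_valued (n : ℕ) (d : Fin (n + 3) → ℕ) (hd : ∀ i, 0 < d i)
    (f : Fin (n + 3) → ℝ)
    (hf1 : (∑ i, f i * (d i : ℝ)) = 0) (hf2 : (∑ i, (f i)^2 * (d i : ℝ)) = 1)
    (hfb : ∀ k, f 0 ≤ f k ∧ f k ≤ f (Fin.last (n + 2)))
    (hmin : ∀ g : Fin (n + 3) → ℝ, (∑ i, g i * (d i : ℝ)) = 0 →
      (∑ i, (g i)^2 * (d i : ℝ)) = 1 →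
      (∀ k, g 0 ≤ g k ∧ g k ≤ g (Fin.last (n + 2))) →
      (f (Fin.last (n + 2)) - f 0)^2 ≤ (g (Fin.last (n + 2)) - g 0)^2) :
    ∀ k, f k = f 0 ∨ f k = f (Fin.last (n + 2)) := by
  set a := f 0 with ha
  set b := f (Fin.last (n+2)) with hb
  obtain ⟨D, hDdef⟩ : ∃ D : ℝ, D = ∑ i, (d i : ℝ) := ⟨_, rfl⟩
  have hDpos : 0 < D := by
    rw [hDdef]
    exact Finset.sum_pos (fun i _ => by exact_mod_cast hd i) ⟨0, Finset.mem_univ 0⟩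
  have hab : a < b := by
    rcases lt_or_ge a b with h | h
    · exact h
    · exfalso
      have hall : ∀ i, f i = a := fun i => le_antisymm ((hfb i).2.trans h) (hfb i).1
      have h1 : a * D = 0 := by
        rw [← hf1, hDdef, Finset.mul_sum]
        exact (Finset.sum_congr rfl fun i _ => by rw [hall i]).symm
      have ha0 : a = 0 := by
        rcases mul_eq_zero.1 h1 with h' | h'
        · exact h'
        · exact absurd h' hDpos.ne'
      have h2 : (0:ℝ) = 1 := by
        rw [← hf2]
        refine (Finset.sum_eq_zero fun i _ => ?_).symm
        rw [hall i, ha0]; ring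
      linarith
  intro k
  by_contra hk
  push_neg at hk
  obtain ⟨hk1, hk2⟩ := hk
  have hka : a < f k := lt_of_le_of_ne (hfb k).1 (Ne.symm hk1)
  have hkb : f k < b := lt_of_le_of_ne (hfb k).2 hk2
  have hk0 : (0 : Fin (n+3)) ≠ k := fun h => hk1 (by rw [← h])
  have hkl : Fin.last (n+2) ≠ k := fun h => hk2 (by rw [← h])
  obtain ⟨dk, hdkdef⟩ : ∃ dk : ℝ, dk = (d k : ℝ) := ⟨_, rfl⟩
  have hdk1 : (1:ℝ) ≤ dk := by
    rw [hdkdef]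
    exact_mod_cast hd k
  have hdk0 : (0:ℝ) < dk := by linarith
  have hdkD : dk < D := by
    rw [hdkdef, hDdef]
    exact Finset.single_lt_sum (f := fun i => (d i : ℝ)) hk0 (Finset.mem_univ k)
      (Finset.mem_univ 0) (show (0:ℝ) < (d 0 : ℝ) by exact_mod_cast hd 0)
      (fun i _ _ => show (0:ℝ) ≤ (d i : ℝ) by positivity)
  obtain ⟨δ, hδdef⟩ : ∃ δ : ℝ, δ = min (f k - a) (b - f k) := ⟨_, rfl⟩
  have hδ : 0 < δ := hδdef ▸ lt_min (by linarith) (by linarith)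
  have hδa : δ ≤ f k - a := hδdef ▸ min_le_left _ _
  have hδb : δ ≤ b - f k := hδdef ▸ min_le_right _ _
  obtain ⟨ε, hεdef⟩ : ∃ ε : ℝ, ε = min (δ/5) (min (1/(1 + |f k| * dk)) (1/(2*dk))) := ⟨_, rfl⟩
  have hfkd : (0:ℝ) < 1 + |f k| * dk := by positivity
  have hε : 0 < ε := hεdef ▸ lt_min (by linarith) (lt_min (by positivity) (by positivity))
  have hε1 : ε ≤ δ/5 := hεdef ▸ min_le_left _ _
  have hε2 : ε ≤ 1/(1 + |f k| * dk) := hεdef ▸ (min_le_right _ _).trans (min_le_left _ _)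
  have hε3 : ε ≤ 1/(2*dk) := hεdef ▸ (min_le_right _ _).trans (min_le_right _ _)
  obtain ⟨t, htdef⟩ : ∃ t : ℝ, t = if 0 ≤ f k then ε else -ε := ⟨_, rfl⟩
  have ht2 : t^2 = ε^2 := by rw [htdef]; split_ifs <;> ring
  have htfk : f k * t = |f k| * ε := by
    rw [htdef]; split_ifs with h
    · rw [abs_of_nonneg h]
    · rw [abs_of_neg (lt_of_not_ge h)]; ring
  have htle : -ε ≤ t ∧ t ≤ ε := by
    rw [htdef]; split_ifs <;> constructor <;> linarith
  obtain ⟨c, hcdef⟩ : ∃ c : ℝ, c = f k * t * dk := ⟨_, rfl⟩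
  have hcabs : c = |f k| * ε * dk := by
    rw [hcdef]
    rw [show f k * t * dk = (f k * t) * dk from rfl, htfk]
  have hc0 : 0 ≤ c := by rw [hcabs]; positivity
  have hc1 : c ≤ 1 := by
    have h1 : ε * (1 + |f k| * dk) ≤ 1 := by
      have := (le_div_iff₀ hfkd).1 hε2
      linarith
    rw [hcabs]
    exact aux_c_le_one _ _ _ (abs_nonneg _) hdk0 hε.le h1
  obtain ⟨m, hmdef⟩ : ∃ m : ℝ, m = 1 - ε^2 * dk * (1 - dk/D) := ⟨_, rfl⟩
  have hdkD' : dk / D < 1 := (div_lt_one hDpos).2 hdkD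
  have hdkD0 : 0 ≤ dk / D := by positivity
  have hm1 : m < 1 := by
    have : 0 < ε^2 * dk * (1 - dk/D) := by
      apply mul_pos (by positivity); linarith
    rw [hmdef]; linarith
  have hm34 : 3/4 ≤ m := by
    have h1 : ε * (2*dk) ≤ 1 := by
      have := (le_div_iff₀ (by positivity : (0:ℝ) < 2*dk)).1 hε3
      linarith
    have h2 := aux_m_ge ε dk (1 - dk/D) hε hdk1 h1 (by linarith) (by linarith)
    rw [hmdef]; linarith
  obtain ⟨α, hαdef⟩ : ∃ α : ℝ, α = Real.sqrt (c^2 + m) - c := ⟨_, rfl⟩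
  have hαc : α + c = Real.sqrt (c^2 + m) := by rw [hαdef]; ring
  have hαc0 : 0 ≤ α + c := hαc ▸ Real.sqrt_nonneg _
  have hkey : (α + c)^2 = c^2 + m := by
    rw [hαc]; exact Real.sq_sqrt (by linarith [sq_nonneg c])
  obtain ⟨hαm, hαpos, hα1, hα4⟩ := aux_alpha c m α hc0 hc1 hm34 hm1 hαc0 hkey
  obtain ⟨β, hβdef⟩ : ∃ β : ℝ, β = -(t*dk)/D := ⟨_, rfl⟩
  obtain ⟨g, hgdef⟩ : ∃ g : Fin (n+3) → ℝ,
      g = fun i => α * f i + β + (if i = k then t else 0) := ⟨_, rfl⟩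
  have hg0 : g 0 = α * a + β := by
    rw [hgdef]; simp [ha, if_neg hk0]
  have hgl : g (Fin.last (n+2)) = α * b + β := by
    rw [hgdef]; simp [hb, if_neg hkl]
  have hg1 : (∑ i, g i * (d i : ℝ)) = 0 := by
    have he : ∀ i, g i * (d i:ℝ) =
        α * (f i * d i) + β * d i + (if i = k then t * (d i:ℝ) else 0) := by
      intro i; rw [hgdef]; by_cases h : i = k <;> simp [h] <;> ring
    rw [Finset.sum_congr rfl fun i _ => he i]
    rw [Finset.sum_add_distrib, Finset.sum_add_distrib, ← Finset.mul_sum, ← Finset.mul_sum,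
      Finset.sum_ite_eq' Finset.univ k, if_pos (Finset.mem_univ k), hf1, ← hDdef, ← hdkdef,
      hβdef]
    field_simp
    ring
  have hg2 : (∑ i, (g i)^2 * (d i : ℝ)) = 1 := by
    have he : ∀ i, (g i)^2 * (d i:ℝ) =
        α^2 * ((f i)^2 * d i) + 2*α*β * (f i * d i) + β^2 * d i
          + (if i = k then (2*(α*f i + β)*t + t^2) * (d i:ℝ) else 0) := by
      intro i; rw [hgdef]; by_cases h : i = k <;> simp [h] <;> ring
    rw [Finset.sum_congr rfl fun i _ => he i]
    rw [Finset.sum_add_distrib, Finset.sum_add_distrib, Finset.sum_add_distrib,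
      ← Finset.mul_sum, ← Finset.mul_sum, ← Finset.mul_sum,
      Finset.sum_ite_eq' Finset.univ k, if_pos (Finset.mem_univ k), hf1, hf2, ← hDdef,
      ← hdkdef]
    have hD0 : D ≠ 0 := ne_of_gt hDpos
    have e1 : β^2 * D = t^2*dk*(dk/D) := by
      rw [hβdef]; field_simp
    have e2 : β * (t * dk) = -(t^2*dk*(dk/D)) := by
      rw [hβdef]; ring
    linear_combination hαm - 2*α*hcdef + hmdef + (dk - dk*(dk/D))*ht2 + e1 + 2*e2
  have hgb : ∀ i, g 0 ≤ g i ∧ g i ≤ g (Fin.last (n+2)) := by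
    intro i
    rw [hg0, hgl]
    by_cases hik : i = k
    · subst hik
      have hgi : g i = α * f i + β + t := by rw [hgdef]; simp
      rw [hgi]
      have h1 := aux_shift α δ t (f i - a) hα4 hδ (by linarith [htle.1]) hδa
      have h2 := aux_shift α δ (-t) (b - f i) hα4 hδ (by linarith [htle.2]) hδb
      constructor
      · linarith [h1]
      · linarith [h2]
    · have hgi : g i = α * f i + β := by rw [hgdef]; simp [if_neg hik]
      rw [hgi]
      constructor
      · linarith [mul_le_mul_of_nonneg_left (hfb i).1 hαpos.le]
      · linarith [mul_le_mul_of_nonneg_left (hfb i).2 hαpos.le]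
  have hfin := hmin g hg1 hg2 hgb
  rw [hg0, hgl] at hfin
  have h1 : (α * b + β - (α * a + β))^2 = α^2 * (b - a)^2 := by ring
  rw [h1] at hfin
  exact aux_final α (b - a) (by linarith) hαpos hα1 hfin
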